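/- Let X be a compact metric space and Y a closed subset such that X \ Y is a countable union of pairwise disjoint nonempty clopen (in X) subsets Y_n with diam(Y_n) → 0. Then Y is a countable intersection of clopen subsets of X. In particular Y is a peak set for any closed subalgebra of C(X) containing all characteristic functions of clopen sets: there exists a continuous function h : X → ℂ with h = 1 on Y and |h(x)| < 1 for all x ∈ X \ Y, where h is a uniform limit of finite sums of scalar multiples of characteristic functions of clopen sets. -/

import Mathlib

open Set Metric Filter Topology

/-- In a compact metric space, a closed set `Y` whose complement is a disjoint union of
nonempty clopen sets of diameter tending to `0` is a countable intersection of clopen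
sets; in particular it is a peak set, peaked by a uniform limit of finite linear
combinations of characteristic functions of clopen sets. -/
theorem stmt4 {X : Type*} [MetricSpace X] [CompactSpace X]
    (Y : Set X) (hYcl : IsClosed Y) (hYne : Y.Nonempty)
    (Yn : ℕ → Set X) (hclopen : ∀ m, IsClopen (Yn m)) (hne : ∀ m, (Yn m).Nonempty)
    (hdisj : Pairwise (Function.onFun Disjoint Yn)) (hunion : (⋃ m, Yn m) = Yᶜ)
    (hdiam : Tendsto (fun m => Metric.diam (Yn m)) atTop (nhds 0)) :
    (∃ C : ℕ → Set X, (∀ m, IsClopen (C m)) ∧ Y = ⋂ m, C m) ∧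
      ∃ h : X → ℂ, Continuous h ∧ (∀ y ∈ Y, h y = 1) ∧
        (∀ x ∉ Y, ‖h x‖ < 1) ∧
        ∀ ε > 0, ∃ (m : ℕ) (c : Fin m → ℂ) (E : Fin m → Set X),
          (∀ i, IsClopen (E i)) ∧
          ∀ x, ‖h x - ∑ i, c i * (E i).indicator 1 x‖ ≤ ε := by
  classical
  have hYnY : ∀ m, Yn m ⊆ Yᶜ := fun m => hunion ▸ Set.subset_iUnion Yn m
  have hmemY : ∀ x ∈ Y, ∀ m, x ∉ Yn m := fun x hx m hm => (hYnY m hm) hx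
  have hex : ∀ x, x ∉ Y → ∃ m, x ∈ Yn m := by
    intro x hx
    have : x ∈ ⋃ m, Yn m := hunion ▸ hx
    exact Set.mem_iUnion.mp this
  have hdisj' : ∀ k x, x ∈ Yn k → ∀ m, m ≠ k → x ∉ Yn m := by
    intro k x hx m hmk hm
    exact (Set.disjoint_left.mp (hdisj hmk)) hm hx
  set g : X → ℝ := fun x => ∑' m, (Yn m).indicator (fun _ => 1/((m:ℝ)+1)) x with hg
  have hgYn : ∀ k x, x ∈ Yn k → g x = 1/((k:ℝ)+1) := by
    intro k x hx
    have h1 : ∀ m, m ≠ k → (Yn m).indicator (fun _ => 1/((m:ℝ)+1)) x = 0 := by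
      intro m hm
      exact Set.indicator_of_notMem (hdisj' k x hx m hm) _
    show (∑' m, (Yn m).indicator (fun _ => 1/((m:ℝ)+1)) x) = 1/((k:ℝ)+1)
    rw [tsum_eq_single k h1, Set.indicator_of_mem hx]
  have hgY : ∀ x ∈ Y, g x = 0 := by
    intro x hx
    have : ∀ m, (Yn m).indicator (fun _ => 1/((m:ℝ)+1)) x = 0 := by
      intro m
      exact Set.indicator_of_notMem (hmemY x hx m) _
    show (∑' m, (Yn m).indicator (fun _ => 1/((m:ℝ)+1)) x) = 0
    simp only [this, tsum_zero]
  set h : X → ℂ := fun x => ((1 - g x : ℝ) : ℂ) with hh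
  -- continuity of g
  have hgc : Continuous g := by
    rw [continuous_iff_continuousAt]
    intro x
    by_cases hx : x ∈ Y
    · rw [ContinuousAt, Metric.tendsto_nhds]
      intro ε hε
      obtain ⟨N, hN⟩ := exists_nat_gt (1/ε)
      have hNε : 1/((N:ℝ)+1) < ε := by
        rw [div_lt_iff₀ (by positivity)]
        rw [div_lt_iff₀ hε] at hN
        nlinarith [Nat.cast_nonneg (α := ℝ) N]
      have hU : IsOpen (⋃ k ∈ Finset.range (N+1), Yn k)ᶜ :=
        (isClosed_biUnion_finset (fun k _ => (hclopen k).isClosed)).isOpen_compl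
      have hxU : x ∈ (⋃ k ∈ Finset.range (N+1), Yn k)ᶜ := by
        simp only [Set.mem_compl_iff, Set.mem_iUnion, not_exists]
        intro k _
        exact hmemY x hx k
      filter_upwards [hU.mem_nhds hxU] with z hz
      rw [hgY x hx, dist_zero_right]
      by_cases hzY : z ∈ Y
      · rw [hgY z hzY]; simpa using hε
      · obtain ⟨k, hk⟩ := hex z hzY
        have hkN : N + 1 ≤ k := by
          by_contra hc
          push_neg at hc
          exact hz (Set.mem_biUnion (Finset.mem_range.mpr hc) hk)
        rw [hgYn k z hk]
        rw [Real.norm_eq_abs, abs_of_nonneg (by positivity)]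
        calc 1/((k:ℝ)+1) ≤ 1/((N:ℝ)+1) := by
              apply one_div_le_one_div_of_le (by positivity)
              have hkN' : ((N:ℝ)+1) ≤ (k:ℝ) := by exact_mod_cast hkN
              linarith
          _ < ε := hNε
    · obtain ⟨k, hk⟩ := hex x hx
      have : g =ᶠ[nhds x] fun _ => 1/((k:ℝ)+1) := by
        filter_upwards [(hclopen k).isOpen.mem_nhds hk] with z hz
        exact hgYn k z hz
      exact this.continuousAt
  have hhc : Continuous h := by
    exact Complex.continuous_ofReal.comp (continuous_const.sub hgc)
  refine ⟨⟨fun m => (Yn m)ᶜ, fun m => (hclopen m).compl, ?_⟩, h, hhc, ?_, ?_, ?_⟩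
  · rw [← Set.compl_iUnion, hunion, compl_compl]
  · intro y hy
    rw [hh]
    simp [hgY y hy]
  · intro x hx
    obtain ⟨k, hk⟩ := hex x hx
    rw [hh]
    simp only [Complex.norm_real, Real.norm_eq_abs]
    rw [hgYn k x hk]
    rw [abs_of_nonneg]
    · have : (0:ℝ) < 1/((k:ℝ)+1) := by positivity
      linarith
    · have : 1/((k:ℝ)+1) ≤ 1 := by
        rw [div_le_one (by positivity)]
        linarith [Nat.cast_nonneg (α := ℝ) k]
      linarith
  · intro ε hε
    obtain ⟨N, hN⟩ := exists_nat_gt (1/ε)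
    have hNε : 1/((N:ℝ)+1) ≤ ε := by
      rw [div_le_iff₀ (by positivity)]
      rw [div_lt_iff₀ hε] at hN
      nlinarith [Nat.cast_nonneg (α := ℝ) N]
    refine ⟨N+2, Fin.cases 1 (fun j => -(((1/((j:ℝ)+1)) : ℝ) : ℂ)),
      Fin.cases Set.univ (fun j => Yn j), ?_, ?_⟩
    · intro i
      refine Fin.cases ?_ ?_ i
      · exact isClopen_univ
      · intro j; exact hclopen j
    · intro x
      rw [Fin.sum_univ_succ]
      simp only [Fin.cases_zero, Fin.cases_succ]
      rw [Set.indicator_of_mem (Set.mem_univ x), Pi.one_apply]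
      by_cases hx : x ∈ Y
      · have hz : ∀ j : Fin (N+1),
            -(((1/((j:ℝ)+1)) : ℝ) : ℂ) * (Yn j).indicator 1 x = 0 := by
          intro j
          rw [Set.indicator_of_notMem (hmemY x hx j), mul_zero]
        rw [Finset.sum_congr rfl (fun j _ => hz j), Finset.sum_const_zero]
        rw [hh]
        simp [hgY x hx]
        positivity
      · obtain ⟨k, hk⟩ := hex x hx
        by_cases hkN : k < N + 1
        · have hsum : ∑ j : Fin (N+1),
              -(((1/((j:ℝ)+1)) : ℝ) : ℂ) * (Yn j).indicator 1 x
              = -(((1/((k:ℝ)+1)) : ℝ) : ℂ) := by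
            rw [Finset.sum_eq_single (⟨k, hkN⟩ : Fin (N+1))]
            · rw [Set.indicator_of_mem hk, Pi.one_apply, mul_one]
            · intro b _ hb
              have hbk : (b : ℕ) ≠ k := by
                intro hc; apply hb; exact Fin.ext hc
              rw [Set.indicator_of_notMem (hdisj' k x hk b hbk), mul_zero]
            · intro hb; exact absurd (Finset.mem_univ _) hb
          rw [hsum, hh]
          simp only
          rw [hgYn k x hk]
          have : ((1 - 1/((k:ℝ)+1) : ℝ) : ℂ) -
              (1 * 1 + -(((1/((k:ℝ)+1)) : ℝ) : ℂ)) = 0 := by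
            push_cast; ring
          rw [this]
          simpa using le_of_lt hε
        · have hz : ∀ j : Fin (N+1),
              -(((1/((j:ℝ)+1)) : ℝ) : ℂ) * (Yn j).indicator 1 x = 0 := by
            intro j
            have : (j : ℕ) ≠ k := by
              intro hc; apply hkN; rw [← hc]; exact j.isLt
            rw [Set.indicator_of_notMem (hdisj' k x hk j this), mul_zero]
          rw [Finset.sum_congr rfl (fun j _ => hz j), Finset.sum_const_zero]
          rw [hh]
          simp only
          rw [hgYn k x hk]
          have heq : ((1 - 1/((k:ℝ)+1) : ℝ) : ℂ) - (1 * 1 + 0)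
              = -(((1/((k:ℝ)+1)) : ℝ) : ℂ) := by push_cast; ring
          rw [heq]
          rw [norm_neg, Complex.norm_real, Real.norm_eq_abs, abs_of_nonneg (by positivity)]
          calc (1:ℝ)/((k:ℝ)+1) ≤ 1/((N:ℝ)+1) := by
                apply one_div_le_one_div_of_le (by positivity)
                push_neg at hkN
                have : ((N:ℝ)+1) ≤ (k:ℝ) := by exact_mod_cast hkN
                linarith
            _ ≤ ε := hNε
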